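/- Let X be a CW complex with cells indexed by I, and let x ∈ X. The sets U_f(x), as f ranges over all functions I → ℕ, form a neighbourhood base of open sets at x: each U_f(x) is open, contains x, and every open neighbourhood of x contains some U_f(x). -/

import Mathlib

open Set Metric Topology

/-- Eventual domination of functions `ℕ → ℕ`. -/
def EvDom (f g : ℕ → ℕ) : Prop := ∀ᶠ n in Filter.atTop, f n ≤ g n

/-- The bounding number `𝔟`: the least cardinality of a family of functions `ℕ → ℕ`
unbounded with respect to eventual domination. -/
noncomputable def boundingNumber : Cardinal :=
  sInf {c : Cardinal | ∃ F : Set (ℕ → ℕ), Cardinal.mk F = c ∧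
    ∀ g : ℕ → ℕ, ∃ f ∈ F, ¬ EvDom f g}

/-- A cell decomposition of a Hausdorff space: characteristic maps from closed discs,
restricting to homeomorphisms onto their images on the open discs, with the open cells
partitioning the space, satisfying closure-finiteness. -/
structure CellStruct (X : Type) [TopologicalSpace X] where
  ι : Type
  dim : ι → ℕ
  map : (i : ι) → EuclideanSpace ℝ (Fin (dim i)) → X
  continuousOn : ∀ i, ContinuousOn (map i) (closedBall 0 1)
  isEmbedding : ∀ i, IsEmbedding ((ball (0 : EuclideanSpace ℝ (Fin (dim i))) 1).restrict (map i))
  pairwiseDisjoint :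
    Pairwise fun i j => Disjoint (map i '' ball 0 1) (map j '' ball 0 1)
  iUnion_eq : ⋃ i, map i '' ball 0 1 = univ
  closureFinite : ∀ i, ∃ F : Finset ι, (∀ j ∈ F, dim j < dim i) ∧
    map i '' sphere 0 1 ⊆ ⋃ j ∈ F, map j '' ball 0 1

namespace CellStruct

variable {X : Type} [TopologicalSpace X]

/-- The open cell with index `i`. -/
def openCell (C : CellStruct X) (i : C.ι) : Set X := C.map i '' ball 0 1

/-- The closed cell with index `i`. -/
def closedCell (C : CellStruct X) (i : C.ι) : Set X := C.map i '' closedBall 0 1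

/-- The image of the boundary sphere of the cell with index `i`. -/
def sphereImage (C : CellStruct X) (i : C.ι) : Set X := C.map i '' sphere 0 1

/-- The cell structure has the weak topology: a set is closed iff its intersection with
every closed cell is closed. -/
def HasWeakTopology (C : CellStruct X) : Prop :=
  ∀ A : Set X, IsClosed A ↔ ∀ i, IsClosed (A ∩ C.closedCell i)

end CellStruct

/-- A CW structure on a (Hausdorff) space: a cell decomposition with closure-finiteness,
such that the topology is the weak topology determined by the closed cells. -/
structure CWStruct (X : Type) [TopologicalSpace X] extends CellStruct X where
  weakTopology : toCellStruct.HasWeakTopology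

namespace CWStruct

variable {X : Type} [TopologicalSpace X]

/-- A subcomplex: a union of open cells containing the closure of each of its cells. -/
def IsSubcomplex (C : CWStruct X) (A : Set X) : Prop :=
  (∃ J : Set C.ι, A = ⋃ j ∈ J, C.openCell j) ∧
    ∀ i, C.openCell i ⊆ A → C.closedCell i ⊆ A

/-- The set of (indices of) cells of a subcomplex `A`. -/
def cells (C : CWStruct X) (A : Set X) : Set C.ι := {i | C.openCell i ⊆ A}

/-- `X` is locally less than `κ`: every point is in the interior of a subcomplex
with fewer than `κ` many cells. -/
def LocallyLT (C : CWStruct X) (κ : Cardinal) : Prop :=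
  ∀ x : X, ∃ A : Set X, C.IsSubcomplex A ∧ Cardinal.mk (C.cells A) < κ ∧ x ∈ interior A

/-- Locally finite: every point is in the interior of a finite subcomplex. -/
def LocallyFinite (C : CWStruct X) : Prop := C.LocallyLT Cardinal.aleph0

/-- Locally countable: every point is in the interior of a countable subcomplex. -/
def LocallyCountable (C : CWStruct X) : Prop := C.LocallyLT (Cardinal.aleph 1)

end CWStruct

/-- `E` is a CW structure on `X × Y` (with the product topology) whose cells are
exactly the products of cells of `C` and `D`, with the corresponding dimensions.
The existence of such an `E` expresses that the product topology on `X × Y`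
makes it a CW complex with the product cell structure. -/
def IsProductCWStruct {X Y : Type} [TopologicalSpace X] [TopologicalSpace Y]
    (C : CWStruct X) (D : CWStruct Y) (E : CWStruct (X × Y)) : Prop :=
  (∀ k : E.ι, ∃ (a : C.ι) (b : D.ι),
      E.openCell k = C.openCell a ×ˢ D.openCell b ∧ E.dim k = C.dim a + D.dim b) ∧
  (∀ (a : C.ι) (b : D.ι), ∃ k : E.ι, E.openCell k = C.openCell a ×ˢ D.openCell b)

/-- A space is compactly generated: a set is closed whenever its intersection with
every compact subset is closed in the subspace topology. -/
def IsKSpace (X : Type) [TopologicalSpace X] : Prop :=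
  ∀ A : Set X, (∀ K : Set X, IsCompact K → IsClosed ((Subtype.val ⁻¹' A : Set K))) → IsClosed A

namespace CWStruct

variable {X : Type} [TopologicalSpace X]

/-- The collar neighbourhood `C^e_n(U)` inside the closed cell `e`:
the image of `{t • z : t ∈ (n/(n+1), 1], z ∈ Sᵈ, φ_e z ∈ U}` under `φ_e`. -/
noncomputable def collar (C : CWStruct X) (e : C.ι) (n : ℕ) (U : Set X) : Set X :=
  C.map e '' {p | ∃ t ∈ Set.Ioc ((n : ℝ) / (n + 1)) 1,
    ∃ z : EuclideanSpace ℝ (Fin (C.dim e)), ‖z‖ = 1 ∧ C.map e z ∈ U ∧ p = t • z}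

/-- The basic neighbourhood `B_n(x)` of `x = φ_{i₀} z` inside its open cell: the image of
the open ball about `z` of radius `min (1/(n+1)) ((1 - ‖z‖)/2)`. -/
noncomputable def ballNbhd (C : CWStruct X) (i₀ : C.ι)
    (z : EuclideanSpace ℝ (Fin (C.dim i₀))) (n : ℕ) : Set X :=
  C.map i₀ '' Metric.ball z (min (1 / (n + 1)) ((1 - ‖z‖) / 2))

open Classical in
/-- The part of the neighbourhood `U_f(x)` lying in the `n`-skeleton, defined by recursion
on dimension: start with `B_{f i₀}(x)` in dimension `dim i₀` (with the empty set in every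
other cell of dimension at most `dim i₀`), and extend through each cell of each higher
dimension by the collar neighbourhoods `C^e_{f e}(·)`. -/
noncomputable def nbhdSkel (C : CWStruct X) (i₀ : C.ι)
    (z : EuclideanSpace ℝ (Fin (C.dim i₀))) (f : C.ι → ℕ) : ℕ → Set X
  | 0 => if C.dim i₀ = 0 then C.ballNbhd i₀ z (f i₀) else ∅
  | n + 1 =>
      (if C.dim i₀ = n + 1 then C.ballNbhd i₀ z (f i₀) else ∅) ∪
      C.nbhdSkel i₀ z f n ∪
      ⋃ e : C.ι, if C.dim e = n + 1 then C.collar e (f e) (C.nbhdSkel i₀ z f n) else ∅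

/-- The open neighbourhood `U_f(x)` of `x = φ_{i₀} z` determined by `f : ι → ℕ`. -/
noncomputable def nbhd (C : CWStruct X) (i₀ : C.ι)
    (z : EuclideanSpace ℝ (Fin (C.dim i₀))) (f : C.ι → ℕ) : Set X :=
  ⋃ n, C.nbhdSkel i₀ z f n

end CWStruct


namespace CWStruct

variable {X : Type} [TopologicalSpace X]

/-- The `n`-skeleton. -/
def skel (C : CWStruct X) (n : ℕ) : Set X := ⋃ i ∈ {i : C.ι | C.dim i ≤ n}, C.openCell i

lemma openCell_subset_skel (C : CWStruct X) {i : C.ι} {n : ℕ} (h : C.dim i ≤ n) :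
    C.openCell i ⊆ C.skel n := fun y hy => mem_biUnion h hy

lemma skel_mono (C : CWStruct X) {m n : ℕ} (h : m ≤ n) : C.skel m ⊆ C.skel n :=
  iUnion₂_subset fun i hi => C.openCell_subset_skel (le_trans hi h)

lemma mem_skel_iff (C : CWStruct X) {n : ℕ} {y : X} :
    y ∈ C.skel n ↔ ∃ i, C.dim i ≤ n ∧ y ∈ C.openCell i := by
  simp [skel]

lemma openCell_subset_closedCell (C : CWStruct X) (i : C.ι) :
    C.openCell i ⊆ C.closedCell i :=
  image_mono ball_subset_closedBall

lemma sphereImage_subset_closedCell (C : CWStruct X) (i : C.ι) :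
    C.sphereImage i ⊆ C.closedCell i :=
  image_mono sphere_subset_closedBall

lemma closedCell_eq (C : CWStruct X) (i : C.ι) :
    C.closedCell i = C.openCell i ∪ C.sphereImage i := by
  show C.map i '' closedBall 0 1 = C.map i '' ball 0 1 ∪ C.map i '' sphere 0 1
  rw [← image_union, ball_union_sphere]

lemma isCompact_closedCell (C : CWStruct X) (i : C.ι) : IsCompact (C.closedCell i) :=
  (isCompact_closedBall _ _).image_of_continuousOn (C.continuousOn i)

lemma isClosed_closedCell [T2Space X] (C : CWStruct X) (i : C.ι) :
    IsClosed (C.closedCell i) :=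
  (C.isCompact_closedCell i).isClosed

lemma isClosed_image_of_isClosed [T2Space X] (C : CWStruct X) (i : C.ι)
    {K : Set (EuclideanSpace ℝ (Fin (C.dim i)))} (hK : IsClosed K)
    (hsub : K ⊆ closedBall 0 1) : IsClosed (C.map i '' K) :=
  (((isCompact_closedBall _ _).of_isClosed_subset hK hsub).image_of_continuousOn
    ((C.continuousOn i).mono hsub)).isClosed

lemma isClosed_sphereImage [T2Space X] (C : CWStruct X) (i : C.ι) :
    IsClosed (C.sphereImage i) :=
  C.isClosed_image_of_isClosed i isClosed_sphere sphere_subset_closedBall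

lemma sphereImage_subset_skel (C : CWStruct X) {i : C.ι} {n : ℕ}
    (h : C.dim i ≤ n + 1) : C.sphereImage i ⊆ C.skel n := by
  obtain ⟨F, hF, hsub⟩ := C.closureFinite i
  refine Subset.trans hsub (iUnion₂_subset fun j hj => C.openCell_subset_skel ?_)
  have := hF j hj; omega

lemma closedCell_subset_skel (C : CWStruct X) {i : C.ι} {n : ℕ}
    (h : C.dim i ≤ n) : C.closedCell i ⊆ C.skel n := by
  rw [C.closedCell_eq]
  exact union_subset (C.openCell_subset_skel h) (C.sphereImage_subset_skel (by omega))

lemma disjoint_openCell (C : CWStruct X) {i j : C.ι} (h : i ≠ j) :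
    Disjoint (C.openCell i) (C.openCell j) := C.pairwiseDisjoint h

lemma disjoint_openCell_skel (C : CWStruct X) {i : C.ι} {n : ℕ} (h : n < C.dim i) :
    Disjoint (C.openCell i) (C.skel n) := by
  simp only [skel, disjoint_iUnion_right]
  intro j hj
  have hne : i ≠ j := by rintro rfl; simp only [mem_setOf_eq] at hj; omega
  exact C.disjoint_openCell hne

lemma disjoint_openCell_closedCell (C : CWStruct X) {i j : C.ι} {n : ℕ}
    (hi : C.dim i = n + 1) (hj : C.dim j = n + 1) (hne : i ≠ j) :
    Disjoint (C.openCell i) (C.closedCell j) := by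
  rw [C.closedCell_eq]
  refine disjoint_union_right.2 ⟨C.disjoint_openCell hne, ?_⟩
  exact (C.disjoint_openCell_skel (n := n) (by omega)).mono_right
    (C.sphereImage_subset_skel (by omega))

lemma isClosed_of_subset_skel [T2Space X] (C : CWStruct X) {S : Set X} {n : ℕ}
    (hS : S ⊆ C.skel n) (h : ∀ j, C.dim j ≤ n → IsClosed (S ∩ C.closedCell j)) :
    IsClosed S := by
  suffices H : ∀ d, ∀ j : C.ι, C.dim j = d → IsClosed (S ∩ C.closedCell j) by
    rw [C.weakTopology]; exact fun j => H _ j rfl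
  intro d
  induction d using Nat.strong_induction_on with
  | _ d IH =>
    intro j hd
    by_cases hdn : C.dim j ≤ n
    · exact h j hdn
    · obtain ⟨F, hF, hsub⟩ := C.closureFinite j
      have key : S ∩ C.closedCell j = C.sphereImage j ∩ ⋃ j' ∈ F, (S ∩ C.closedCell j') := by
        ext y
        constructor
        · rintro ⟨hyS, hycc⟩
          have hysk := hS hyS
          have hysph : y ∈ C.sphereImage j := by
            rcases (C.closedCell_eq j ▸ hycc) with h1 | h1
            · exact absurd hysk (Set.disjoint_left.1 (C.disjoint_openCell_skel (by omega)) h1)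
            · exact h1
          refine ⟨hysph, ?_⟩
          obtain ⟨j', hj', hy'⟩ := mem_iUnion₂.1 (hsub hysph)
          exact mem_biUnion hj' ⟨hyS, C.openCell_subset_closedCell j' hy'⟩
        · rintro ⟨hysph, hy⟩
          obtain ⟨j', hj', hyS, _⟩ := mem_iUnion₂.1 hy
          exact ⟨hyS, C.closedCell_eq j ▸ Or.inr hysph⟩
      rw [key]
      refine (C.isClosed_sphereImage j).inter (Set.Finite.isClosed_biUnion F.finite_toSet ?_)
      intro j' hj'
      exact IH (C.dim j') (by have := hF j' hj'; omega) j' rfl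

lemma isClosed_skel [T2Space X] (C : CWStruct X) (n : ℕ) : IsClosed (C.skel n) := by
  refine C.isClosed_of_subset_skel (Subset.rfl) fun j hj => ?_
  rw [inter_eq_self_of_subset_right (C.closedCell_subset_skel hj)]
  exact C.isClosed_closedCell j

end CWStruct
namespace CWStruct

variable {X : Type} [TopologicalSpace X]

lemma frac_nonneg (m : ℕ) : (0:ℝ) ≤ (m:ℝ)/(m+1) := by positivity

lemma frac_lt_one (m : ℕ) : (m:ℝ)/(m+1) < 1 := by
  rw [div_lt_one (by positivity)]
  linarith [Nat.cast_nonneg (α := ℝ) m]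

lemma frac_mono {m m' : ℕ} (h : m ≤ m') : (m:ℝ)/(m+1) ≤ (m':ℝ)/(m'+1) := by
  rw [div_le_div_iff₀ (by positivity) (by positivity)]
  have h1 : (m:ℝ) ≤ m' := Nat.cast_le.2 h
  nlinarith [Nat.cast_nonneg (α := ℝ) m]

lemma ballNbhd_subset_openCell (C : CWStruct X) {i₀ : C.ι}
    {z : EuclideanSpace ℝ (Fin (C.dim i₀))} (hz : ‖z‖ < 1) (m : ℕ) :
    C.ballNbhd i₀ z m ⊆ C.openCell i₀ := by
  refine image_mono fun w hw => ?_
  rw [mem_ball] at hw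
  rw [mem_ball_zero_iff]
  have h1 : dist w z < (1 - ‖z‖)/2 := lt_of_lt_of_le hw (min_le_right _ _)
  have h2 : ‖w‖ ≤ ‖w - z‖ + ‖z‖ := by
    have := norm_add_le (w - z) z; simpa using this
  rw [dist_eq_norm] at h1
  linarith

lemma ballNbhd_anti (C : CWStruct X) (i₀ : C.ι)
    (z : EuclideanSpace ℝ (Fin (C.dim i₀))) {m m' : ℕ} (h : m ≤ m') :
    C.ballNbhd i₀ z m' ⊆ C.ballNbhd i₀ z m := by
  refine image_mono (ball_subset_ball (min_le_min ?_ le_rfl))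
  have h1 : (0:ℝ) < m + 1 := by positivity
  have h2 : (0:ℝ) < m' + 1 := by positivity
  rw [div_le_div_iff₀ h2 h1]
  have : (m:ℝ) ≤ m' := Nat.cast_le.2 h
  linarith

lemma mem_ballNbhd_self (C : CWStruct X) {i₀ : C.ι}
    {z : EuclideanSpace ℝ (Fin (C.dim i₀))} (hz : ‖z‖ < 1) (m : ℕ) :
    C.map i₀ z ∈ C.ballNbhd i₀ z m := by
  refine ⟨z, mem_ball_self ?_, rfl⟩
  have h1 : (0:ℝ) < 1/(m+1) := by positivity
  have h2 : (0:ℝ) < (1 - ‖z‖)/2 := by linarith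
  exact lt_min h1 h2

lemma collar_subset_closedCell (C : CWStruct X) (e : C.ι) (m : ℕ) (U : Set X) :
    C.collar e m U ⊆ C.closedCell e := by
  refine image_mono ?_
  rintro p ⟨t, ⟨hta, ht1⟩, z', hz', hU, rfl⟩
  rw [mem_closedBall_zero_iff, norm_smul, hz', mul_one, Real.norm_eq_abs,
    abs_of_nonneg (le_trans (frac_nonneg m) (le_of_lt hta))]
  exact ht1

lemma collar_anti (C : CWStruct X) (e : C.ι) {m m' : ℕ} (h : m ≤ m') (U : Set X) :
    C.collar e m' U ⊆ C.collar e m U := by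
  refine image_mono ?_
  rintro p ⟨t, ⟨hta, ht1⟩, z', hz', hU, rfl⟩
  exact ⟨t, ⟨lt_of_le_of_lt (frac_mono h) hta, ht1⟩, z', hz', hU, rfl⟩

lemma collar_subset_union (C : CWStruct X) (e : C.ι) (m : ℕ) (U : Set X) :
    C.collar e m U ⊆ C.openCell e ∪ (U ∩ C.sphereImage e) := by
  rintro y ⟨p, ⟨t, ⟨hta, ht1⟩, z', hz', hU, rfl⟩, rfl⟩
  have ht0 : 0 < t := lt_of_le_of_lt (frac_nonneg m) hta
  rcases lt_or_eq_of_le ht1 with h1 | h1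
  · exact Or.inl ⟨t • z', by
      rw [mem_ball_zero_iff, norm_smul, hz', mul_one, Real.norm_eq_abs, abs_of_pos ht0]
      exact h1, rfl⟩
  · right
    rw [h1, one_smul]
    exact ⟨hU, ⟨z', mem_sphere_zero_iff_norm.2 hz', rfl⟩⟩

lemma nbhdSkel_zero (C : CWStruct X) (i₀ : C.ι) (z : EuclideanSpace ℝ (Fin (C.dim i₀)))
    (f : C.ι → ℕ) :
    C.nbhdSkel i₀ z f 0 = if C.dim i₀ = 0 then C.ballNbhd i₀ z (f i₀) else ∅ := rfl

lemma nbhdSkel_succ (C : CWStruct X) (i₀ : C.ι) (z : EuclideanSpace ℝ (Fin (C.dim i₀)))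
    (f : C.ι → ℕ) (n : ℕ) :
    C.nbhdSkel i₀ z f (n+1) =
      (if C.dim i₀ = n + 1 then C.ballNbhd i₀ z (f i₀) else ∅) ∪
      C.nbhdSkel i₀ z f n ∪
      ⋃ e : C.ι, if C.dim e = n + 1 then C.collar e (f e) (C.nbhdSkel i₀ z f n) else ∅ := rfl

lemma nbhdSkel_subset_skel (C : CWStruct X) {i₀ : C.ι}
    {z : EuclideanSpace ℝ (Fin (C.dim i₀))} (hz : ‖z‖ < 1) (f : C.ι → ℕ) :
    ∀ n, C.nbhdSkel i₀ z f n ⊆ C.skel n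
  | 0 => by
      rw [nbhdSkel_zero]
      split_ifs with hd
      · exact (C.ballNbhd_subset_openCell hz _).trans (C.openCell_subset_skel (by omega))
      · exact empty_subset _
  | n+1 => by
      rw [nbhdSkel_succ]
      refine union_subset (union_subset ?_ ?_) ?_
      · split_ifs with hd
        · exact (C.ballNbhd_subset_openCell hz _).trans (C.openCell_subset_skel (by omega))
        · exact empty_subset _
      · exact (C.nbhdSkel_subset_skel hz f n).trans (C.skel_mono (by omega))
      · refine iUnion_subset fun e => ?_
        split_ifs with hd
        · exact (C.collar_subset_closedCell e _ _).trans (C.closedCell_subset_skel (by omega))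
        · exact empty_subset _

lemma nbhdSkel_le_succ (C : CWStruct X) (i₀ : C.ι) (z : EuclideanSpace ℝ (Fin (C.dim i₀)))
    (f : C.ι → ℕ) (n : ℕ) : C.nbhdSkel i₀ z f n ⊆ C.nbhdSkel i₀ z f (n+1) := by
  rw [nbhdSkel_succ]
  exact (subset_union_right).trans subset_union_left

lemma nbhdSkel_mono (C : CWStruct X) (i₀ : C.ι) (z : EuclideanSpace ℝ (Fin (C.dim i₀)))
    (f : C.ι → ℕ) {n m : ℕ} (h : n ≤ m) :
    C.nbhdSkel i₀ z f n ⊆ C.nbhdSkel i₀ z f m := by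
  induction m, h using Nat.le_induction with
  | base => exact Subset.rfl
  | succ m hm IH => exact IH.trans (C.nbhdSkel_le_succ i₀ z f m)

lemma nbhdSkel_succ_inter_skel (C : CWStruct X) {i₀ : C.ι}
    {z : EuclideanSpace ℝ (Fin (C.dim i₀))} (hz : ‖z‖ < 1) (f : C.ι → ℕ) (n : ℕ) :
    C.nbhdSkel i₀ z f (n+1) ∩ C.skel n = C.nbhdSkel i₀ z f n := by
  apply Subset.antisymm
  · rintro y ⟨hy, hysk⟩
    rw [nbhdSkel_succ] at hy
    rcases hy with (hy | hy) | hy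
    · split_ifs at hy with hd
      · exact absurd hysk (disjoint_left.1 (C.disjoint_openCell_skel (by omega))
          (C.ballNbhd_subset_openCell hz _ hy))
      · exact absurd hy (notMem_empty y)
    · exact hy
    · obtain ⟨e, hy⟩ := mem_iUnion.1 hy
      split_ifs at hy with hd
      · rcases C.collar_subset_union e _ _ hy with h1 | h1
        · exact absurd hysk (disjoint_left.1 (C.disjoint_openCell_skel (by omega)) h1)
        · exact h1.1
      · exact absurd hy (notMem_empty y)
  · intro y hy
    exact ⟨C.nbhdSkel_le_succ i₀ z f n hy, C.nbhdSkel_subset_skel hz f n hy⟩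

lemma nbhdSkel_inter_skel (C : CWStruct X) {i₀ : C.ι}
    {z : EuclideanSpace ℝ (Fin (C.dim i₀))} (hz : ‖z‖ < 1) (f : C.ι → ℕ) {n m : ℕ}
    (h : n ≤ m) : C.nbhdSkel i₀ z f m ∩ C.skel n = C.nbhdSkel i₀ z f n := by
  induction m, h using Nat.le_induction with
  | base => exact inter_eq_self_of_subset_left (C.nbhdSkel_subset_skel hz f n)
  | succ m hm IH =>
      have h1 : C.skel n ⊆ C.skel m := C.skel_mono hm
      rw [← IH, ← C.nbhdSkel_succ_inter_skel hz f m, inter_assoc,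
        inter_eq_self_of_subset_right h1]

lemma nbhdSkel_congr (C : CWStruct X) (i₀ : C.ι) (z : EuclideanSpace ℝ (Fin (C.dim i₀)))
    {f f' : C.ι → ℕ} :
    ∀ n, (∀ e, C.dim e ≤ n → f e = f' e) → C.nbhdSkel i₀ z f n = C.nbhdSkel i₀ z f' n
  | 0, h => by
      rw [nbhdSkel_zero, nbhdSkel_zero]
      split_ifs with hd
      · rw [h i₀ (by omega)]
      · rfl
  | n+1, h => by
      have hrec := nbhdSkel_congr C i₀ z n (fun e he => h e (by omega))
      rw [nbhdSkel_succ, nbhdSkel_succ, hrec]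
      congr 1
      · congr 1
        split_ifs with hd
        · rw [h i₀ (by omega)]
        · rfl
      · refine iUnion_congr fun e => ?_
        split_ifs with hd
        · rw [h e (by omega)]
        · rfl

lemma nbhdSkel_succ_inter_closedCell (C : CWStruct X) {i₀ : C.ι}
    {z : EuclideanSpace ℝ (Fin (C.dim i₀))} (hz : ‖z‖ < 1) (f : C.ι → ℕ) {n : ℕ} {j : C.ι}
    (hj : C.dim j = n + 1) :
    C.nbhdSkel i₀ z f (n+1) ∩ C.closedCell j =
      (C.nbhdSkel i₀ z f n ∩ C.closedCell j) ∪
      (C.collar j (f j) (C.nbhdSkel i₀ z f n) ∩ C.closedCell j) ∪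
      ((if C.dim i₀ = n + 1 then C.ballNbhd i₀ z (f i₀) else ∅) ∩ C.closedCell j) := by
  apply Subset.antisymm
  · rintro y ⟨hy, hycc⟩
    rw [nbhdSkel_succ] at hy
    rcases hy with (hy | hy) | hy
    · exact Or.inr ⟨hy, hycc⟩
    · exact Or.inl (Or.inl ⟨hy, hycc⟩)
    · obtain ⟨e, hy⟩ := mem_iUnion.1 hy
      split_ifs at hy with hd
      · by_cases hej : e = j
        · subst hej
          exact Or.inl (Or.inr ⟨hy, hycc⟩)
        · rcases C.collar_subset_union e _ _ hy with h1 | h1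
          · exact absurd hycc
              (disjoint_left.1 (C.disjoint_openCell_closedCell hd hj hej) h1)
          · exact Or.inl (Or.inl ⟨h1.1, hycc⟩)
      · exact absurd hy (notMem_empty y)
  · rw [nbhdSkel_succ]
    refine union_subset (union_subset ?_ ?_) ?_
    · exact inter_subset_inter_left _ ((subset_union_right).trans subset_union_left)
    · refine inter_subset_inter_left _ (Subset.trans ?_ subset_union_right)
      intro y hy
      exact mem_iUnion.2 ⟨j, by rw [if_pos hj]; exact hy⟩
    · exact inter_subset_inter_left _ ((subset_union_left).trans subset_union_left)

end CWStruct
namespace CWStruct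

variable {X : Type} [TopologicalSpace X]

lemma injOn_ball (C : CWStruct X) (i : C.ι) : Set.InjOn (C.map i) (ball 0 1) := by
  intro w hw w' hw' h
  have := (C.isEmbedding i).injective (a₁ := ⟨w, hw⟩) (a₂ := ⟨w', hw'⟩) h
  exact congrArg Subtype.val this

lemma ballr_subset_ball {d : ℕ} {z : EuclideanSpace ℝ (Fin d)} (hz : ‖z‖ < 1) {r : ℝ}
    (hr : r ≤ (1 - ‖z‖)/2) : ball z r ⊆ ball (0 : EuclideanSpace ℝ (Fin d)) 1 := by
  intro w hw
  rw [mem_ball] at hw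
  rw [mem_ball_zero_iff]
  have h2 : ‖w‖ ≤ ‖w - z‖ + ‖z‖ := by
    have := norm_add_le (w - z) z; simpa using this
  rw [dist_eq_norm] at hw
  linarith

lemma compl_diff_inter {A B : Set X} (h : A ⊆ B) : (B \ A)ᶜ ∩ B = A := by
  ext y
  simp only [mem_inter_iff, mem_compl_iff, mem_diff, not_and, not_not]
  constructor
  · rintro ⟨h1, h2⟩; exact h1 h2
  · intro hy; exact ⟨fun _ => hy, h hy⟩

lemma cell_closed [T2Space X] (C : CWStruct X) {i₀ : C.ι}
    {z : EuclideanSpace ℝ (Fin (C.dim i₀))} (hz : ‖z‖ < 1) (f : C.ι → ℕ) {n : ℕ} {j : C.ι}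
    (hj : C.dim j = n + 1) {W : Set X} (hWo : IsOpen W)
    (hNW : C.nbhdSkel i₀ z f n = W ∩ C.skel n)
    {Ob : Set (EuclideanSpace ℝ (Fin (C.dim j)))} (hObo : IsOpen Ob)
    (hOb : ∀ w ∈ closedBall (0 : EuclideanSpace ℝ (Fin (C.dim j))) 1,
      (C.map j w ∈ (if C.dim i₀ = n + 1 then C.ballNbhd i₀ z (f i₀) else ∅) ∩ C.closedCell j
        ↔ w ∈ Ob)) :
    IsClosed (C.closedCell j \ C.nbhdSkel i₀ z f (n+1)) := by
  set g := C.map j with hg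
  set a : ℝ := (f j : ℝ)/((f j : ℝ)+1) with ha
  set OQ : Set (EuclideanSpace ℝ (Fin (C.dim j))) :=
    {w | a < ‖w‖} ∩ (fun w => g (‖w‖⁻¹ • w)) ⁻¹' W with hOQ
  have h0 : ∀ w ∈ {w : EuclideanSpace ℝ (Fin (C.dim j)) | a < ‖w‖}, ‖w‖ ≠ 0 := by
    intro w hw
    simp only [mem_setOf_eq] at hw
    have := frac_nonneg (f j)
    have : (0:ℝ) < ‖w‖ := lt_of_le_of_lt (by rw [ha]; exact this) hw
    exact ne_of_gt this
  have haset : IsOpen {w : EuclideanSpace ℝ (Fin (C.dim j)) | a < ‖w‖} :=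
    isOpen_lt continuous_const continuous_norm
  have hnorml : ContinuousOn (fun w : EuclideanSpace ℝ (Fin (C.dim j)) => ‖w‖⁻¹ • w)
      {w : EuclideanSpace ℝ (Fin (C.dim j)) | a < ‖w‖} :=
    (continuous_norm.continuousOn.inv₀ h0).smul continuous_id.continuousOn
  have hmaps : MapsTo (fun w : EuclideanSpace ℝ (Fin (C.dim j)) => ‖w‖⁻¹ • w)
      {w : EuclideanSpace ℝ (Fin (C.dim j)) | a < ‖w‖}
      (closedBall (0 : EuclideanSpace ℝ (Fin (C.dim j))) 1) := by
    intro w hw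
    rw [mem_closedBall_zero_iff, norm_smul, norm_inv, norm_norm,
      inv_mul_cancel₀ (h0 w hw)]
  have hcont : ContinuousOn (fun w : EuclideanSpace ℝ (Fin (C.dim j)) => g (‖w‖⁻¹ • w))
      {w : EuclideanSpace ℝ (Fin (C.dim j)) | a < ‖w‖} :=
    (C.continuousOn j).comp hnorml hmaps
  have hOQo : IsOpen OQ := hcont.isOpen_inter_preimage haset hWo
  have key : closedBall (0 : EuclideanSpace ℝ (Fin (C.dim j))) 1
        ∩ g ⁻¹' (C.nbhdSkel i₀ z f (n+1))
      = closedBall 0 1 ∩ (Ob ∪ OQ) := by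
    ext w
    constructor
    · rintro ⟨hw, hgw⟩
      refine ⟨hw, ?_⟩
      rw [mem_preimage] at hgw
      have hgcc : g w ∈ C.closedCell j := ⟨w, hw, rfl⟩
      have hmem := (C.nbhdSkel_succ_inter_closedCell hz f hj) ▸ (mem_inter hgw hgcc)
      have hcase2 : g w ∈ C.nbhdSkel i₀ z f n → w ∈ OQ := by
        intro hN
        have hsk : g w ∈ C.skel n := C.nbhdSkel_subset_skel hz f n hN
        have hwnb : w ∉ ball (0 : EuclideanSpace ℝ (Fin (C.dim j))) 1 := by
          intro hb
          exact absurd hsk (disjoint_left.1 (C.disjoint_openCell_skel (by omega)) ⟨w, hb, rfl⟩)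
        have hw1 : ‖w‖ = 1 := by
          rw [mem_closedBall_zero_iff] at hw
          rw [mem_ball_zero_iff] at hwnb
          push_neg at hwnb
          linarith
        rw [hOQ]
        refine mem_inter ?_ ?_
        · show a < ‖w‖
          rw [hw1]; exact frac_lt_one (f j)
        · show g (‖w‖⁻¹ • w) ∈ W
          rw [hw1, inv_one, one_smul]
          rw [hNW] at hN
          exact hN.1
      rcases hmem with (hc | hc) | hc
      · exact Or.inr (hcase2 hc.1)
      · obtain ⟨p, ⟨t, ⟨hta, ht1⟩, z', hz1, hzN, rfl⟩, hgp⟩ := hc.1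
        have ht0 : 0 < t := lt_of_le_of_lt (frac_nonneg (f j)) hta
        rcases lt_or_eq_of_le ht1 with hlt | heq
        · have hpball : t • z' ∈ ball (0 : EuclideanSpace ℝ (Fin (C.dim j))) 1 := by
            rw [mem_ball_zero_iff, norm_smul, hz1, mul_one, Real.norm_eq_abs, abs_of_pos ht0]
            exact hlt
          have hwball : w ∈ ball (0 : EuclideanSpace ℝ (Fin (C.dim j))) 1 := by
            by_contra hnb
            have hwsp : w ∈ sphere (0 : EuclideanSpace ℝ (Fin (C.dim j))) 1 := by
              have hbs : w ∈ ball (0 : EuclideanSpace ℝ (Fin (C.dim j))) 1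
                  ∪ sphere (0 : EuclideanSpace ℝ (Fin (C.dim j))) 1 := by
                rw [ball_union_sphere]; exact hw
              rcases hbs with h1 | h1
              · exact absurd h1 hnb
              · exact h1
            have h1 : g w ∈ C.skel n := C.sphereImage_subset_skel (by omega) ⟨w, hwsp, rfl⟩
            have h2 : g w ∈ C.openCell j := ⟨t • z', hpball, hgp⟩
            exact absurd h1 (disjoint_left.1 (C.disjoint_openCell_skel (by omega)) h2)
          have hw_eq : w = t • z' := C.injOn_ball j hwball hpball hgp.symm
          have hnw : ‖w‖ = t := by
            rw [hw_eq, norm_smul, hz1, mul_one, Real.norm_eq_abs, abs_of_pos ht0]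
          refine Or.inr ?_
          rw [hOQ]
          refine mem_inter ?_ ?_
          · show a < ‖w‖
            rw [hnw]; exact hta
          · show g (‖w‖⁻¹ • w) ∈ W
            have hzz : ‖w‖⁻¹ • w = z' := by
              rw [hnw, hw_eq, smul_smul, inv_mul_cancel₀ (ne_of_gt ht0), one_smul]
            rw [hzz]
            rw [hNW] at hzN
            exact hzN.1
        · have hN1 : C.map j (t • z') ∈ C.nbhdSkel i₀ z f n := by
            rw [heq, one_smul]
            exact hzN
          exact Or.inr (hcase2 (hgp ▸ hN1))
      · exact Or.inl ((hOb w hw).1 hc)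
    · rintro ⟨hw, hO⟩
      refine ⟨hw, mem_preimage.2 ?_⟩
      rcases hO with hOb' | hOQ'
      · have hBm := (hOb w hw).2 hOb'
        rw [nbhdSkel_succ]
        exact Or.inl (Or.inl hBm.1)
      · rw [hOQ] at hOQ'
        obtain ⟨hwa, hwW⟩ := hOQ'
        simp only [mem_setOf_eq] at hwa
        have hn0 : (0:ℝ) < ‖w‖ := lt_of_le_of_lt (frac_nonneg (f j)) hwa
        set u := ‖w‖⁻¹ • w with hu
        have hu1 : ‖u‖ = 1 := by
          rw [hu, norm_smul, norm_inv, norm_norm, inv_mul_cancel₀ (ne_of_gt hn0)]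
        have husk : g u ∈ C.skel n :=
          C.sphereImage_subset_skel (by omega) ⟨u, mem_sphere_zero_iff_norm.2 hu1, rfl⟩
        have huN : g u ∈ C.nbhdSkel i₀ z f n := by
          rw [hNW]; exact ⟨hwW, husk⟩
        have hwu : w = ‖w‖ • u := by
          rw [hu, smul_smul, mul_inv_cancel₀ (ne_of_gt hn0), one_smul]
        rw [nbhdSkel_succ]
        refine Or.inr (mem_iUnion.2 ⟨j, ?_⟩)
        rw [if_pos hj]
        refine ⟨‖w‖ • u, ⟨‖w‖, ⟨hwa, mem_closedBall_zero_iff.1 hw⟩, u, hu1, huN, rfl⟩, ?_⟩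
        rw [← hwu]
  have himg : C.closedCell j \ C.nbhdSkel i₀ z f (n+1) = g '' (closedBall 0 1 \ (Ob ∪ OQ)) := by
    have h1 : closedBall (0 : EuclideanSpace ℝ (Fin (C.dim j))) 1 \ (Ob ∪ OQ)
        = closedBall 0 1 ∩ g ⁻¹' (C.nbhdSkel i₀ z f (n+1))ᶜ := by
      ext w
      constructor
      · rintro ⟨hw, hno⟩
        refine ⟨hw, fun hmem => hno ?_⟩
        have h2 : w ∈ closedBall (0 : EuclideanSpace ℝ (Fin (C.dim j))) 1 ∩ (Ob ∪ OQ) :=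
          key ▸ (mem_inter hw hmem)
        exact h2.2
      · rintro ⟨hw, hnc⟩
        refine ⟨hw, fun ho => hnc ?_⟩
        have h2 : w ∈ closedBall (0 : EuclideanSpace ℝ (Fin (C.dim j))) 1
            ∩ g ⁻¹' (C.nbhdSkel i₀ z f (n+1)) := key.symm ▸ (mem_inter hw ho)
        exact h2.2
    rw [h1]
    have h2 := image_inter_preimage g (closedBall 0 1) (C.nbhdSkel i₀ z f (n+1))ᶜ
    rw [preimage_compl]
    rw [show closedBall (0 : EuclideanSpace ℝ (Fin (C.dim j))) 1 ∩ (g ⁻¹' (C.nbhdSkel i₀ z f (n+1)))ᶜ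
        = closedBall 0 1 ∩ g ⁻¹' (C.nbhdSkel i₀ z f (n+1))ᶜ from by rw [preimage_compl]]
    rw [h2, diff_eq]
    rfl
  rw [himg]
  refine C.isClosed_image_of_isClosed j ?_ diff_subset
  rw [diff_eq]
  exact Metric.isClosed_closedBall.inter (hObo.union hOQo).isClosed_compl

lemma exists_open_skel [T2Space X] (C : CWStruct X) {i₀ : C.ι}
    {z : EuclideanSpace ℝ (Fin (C.dim i₀))} (hz : ‖z‖ < 1) (f : C.ι → ℕ) :
    ∀ n, ∃ W : Set X, IsOpen W ∧ C.nbhdSkel i₀ z f n = W ∩ C.skel n := by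
  intro n
  induction n with
  | zero =>
      refine ⟨(C.skel 0 \ C.nbhdSkel i₀ z f 0)ᶜ, ?_,
        (compl_diff_inter (C.nbhdSkel_subset_skel hz f 0)).symm⟩
      rw [isOpen_compl_iff]
      refine C.isClosed_of_subset_skel diff_subset fun j hj => ?_
      have hj0 : C.dim j = 0 := by omega
      have hempty : IsEmpty (Fin (C.dim j)) := by rw [hj0]; infer_instance
      have hsub2 : Subsingleton (EuclideanSpace ℝ (Fin (C.dim j))) :=
        ⟨fun a b => by ext i; exact (hempty.false i).elim⟩
      have hfin : (C.closedCell j).Finite :=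
        ((Set.subsingleton_of_subsingleton (s := closedBall 0 1)).image (C.map j)).finite
      exact (hfin.subset inter_subset_right).isClosed
  | succ n IH =>
      obtain ⟨W, hWo, hNW⟩ := IH
      refine ⟨(C.skel (n+1) \ C.nbhdSkel i₀ z f (n+1))ᶜ, ?_,
        (compl_diff_inter (C.nbhdSkel_subset_skel hz f (n+1))).symm⟩
      rw [isOpen_compl_iff]
      refine C.isClosed_of_subset_skel diff_subset fun j hj => ?_
      have hccsub : C.closedCell j ⊆ C.skel (n+1) := C.closedCell_subset_skel hj
      have heq : (C.skel (n+1) \ C.nbhdSkel i₀ z f (n+1)) ∩ C.closedCell j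
          = C.closedCell j \ C.nbhdSkel i₀ z f (n+1) := by
        ext y
        constructor
        · rintro ⟨⟨_, h2⟩, h3⟩; exact ⟨h3, h2⟩
        · rintro ⟨h1, h2⟩; exact ⟨⟨hccsub h1, h2⟩, h1⟩
      rw [heq]
      rcases Nat.lt_or_ge (C.dim j) (n+1) with hlt | hge
      · have hcs : C.closedCell j ⊆ C.skel n := C.closedCell_subset_skel (by omega)
        have heq2 : C.closedCell j \ C.nbhdSkel i₀ z f (n+1) = C.closedCell j ∩ Wᶜ := by
          ext y
          constructor
          · rintro ⟨h1, h2⟩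
            refine ⟨h1, fun hyW => h2 ?_⟩
            have hyN : y ∈ C.nbhdSkel i₀ z f n := by rw [hNW]; exact ⟨hyW, hcs h1⟩
            exact C.nbhdSkel_le_succ i₀ z f n hyN
          · rintro ⟨h1, h2⟩
            refine ⟨h1, fun hyN => h2 ?_⟩
            have hyn : y ∈ C.nbhdSkel i₀ z f n := by
              rw [← C.nbhdSkel_succ_inter_skel hz f n]
              exact ⟨hyN, hcs h1⟩
            rw [hNW] at hyn
            exact hyn.1
        rw [heq2]
        exact (C.isClosed_closedCell j).inter (isClosed_compl_iff.2 hWo)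
      · have hjd : C.dim j = n + 1 := by omega
        by_cases hji : j = i₀
        · subst hji
          refine C.cell_closed hz f hjd hWo hNW
            (Ob := ball z (min (1/((f j : ℝ)+1)) ((1 - ‖z‖)/2))) isOpen_ball ?_
          intro w hw
          rw [if_pos hjd]
          constructor
          · rintro ⟨⟨w', hw', hww'⟩, hcc⟩
            have hw'b : w' ∈ ball (0 : EuclideanSpace ℝ (Fin (C.dim j))) 1 :=
              ballr_subset_ball hz (min_le_right _ _) hw'
            have hwb : w ∈ ball (0 : EuclideanSpace ℝ (Fin (C.dim j))) 1 := by
              by_contra hnb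
              have hwsp : w ∈ sphere (0 : EuclideanSpace ℝ (Fin (C.dim j))) 1 := by
                have hbs : w ∈ ball (0 : EuclideanSpace ℝ (Fin (C.dim j))) 1
                    ∪ sphere (0 : EuclideanSpace ℝ (Fin (C.dim j))) 1 := by
                  rw [ball_union_sphere]; exact hw
                rcases hbs with h1 | h1
                · exact absurd h1 hnb
                · exact h1
              have h1 : C.map j w ∈ C.skel n :=
                C.sphereImage_subset_skel (by omega) ⟨w, hwsp, rfl⟩
              have h2 : C.map j w ∈ C.openCell j := ⟨w', hw'b, hww'⟩
              exact absurd h1 (disjoint_left.1 (C.disjoint_openCell_skel (by omega)) h2)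
            have : w' = w := C.injOn_ball j hw'b hwb hww'
            rw [← this]
            exact hw'
          · intro hwb
            have hwball : w ∈ ball (0 : EuclideanSpace ℝ (Fin (C.dim j))) 1 :=
              ballr_subset_ball hz (min_le_right _ _) hwb
            exact ⟨⟨w, hwb, rfl⟩, ⟨w, ball_subset_closedBall hwball, rfl⟩⟩
        · refine C.cell_closed hz f hjd hWo hNW (Ob := (∅ : Set _)) isOpen_empty ?_
          intro w hw
          simp only [mem_empty_iff_false, iff_false]
          rintro ⟨hb, hcc⟩
          split_ifs at hb with hd
          · exact absurd hcc
              (disjoint_left.1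
                (C.disjoint_openCell_closedCell hd hjd (fun h => hji h.symm))
                (C.ballNbhd_subset_openCell hz _ hb))
          · exact absurd hb (notMem_empty _)

lemma isOpen_nbhd [T2Space X] (C : CWStruct X) {i₀ : C.ι}
    {z : EuclideanSpace ℝ (Fin (C.dim i₀))} (hz : ‖z‖ < 1) (f : C.ι → ℕ) :
    IsOpen (C.nbhd i₀ z f) := by
  rw [← isClosed_compl_iff, C.weakTopology]
  intro i
  obtain ⟨W, hWo, hNW⟩ := C.exists_open_skel hz f (C.dim i)
  have hcc : C.closedCell i ⊆ C.skel (C.dim i) := C.closedCell_subset_skel le_rfl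
  have heq : (C.nbhd i₀ z f)ᶜ ∩ C.closedCell i = C.closedCell i ∩ Wᶜ := by
    ext y
    simp only [mem_inter_iff, mem_compl_iff]
    constructor
    · rintro ⟨h1, h2⟩
      refine ⟨h2, fun hyW => h1 ?_⟩
      have hyN : y ∈ C.nbhdSkel i₀ z f (C.dim i) := by rw [hNW]; exact ⟨hyW, hcc h2⟩
      exact mem_iUnion.2 ⟨_, hyN⟩
    · rintro ⟨h1, h2⟩
      refine ⟨fun hyN => h2 ?_, h1⟩
      obtain ⟨m, hm⟩ := mem_iUnion.1 hyN
      have hyd : y ∈ C.nbhdSkel i₀ z f (C.dim i) := by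
        rcases le_total m (C.dim i) with h | h
        · exact C.nbhdSkel_mono i₀ z f h hm
        · rw [← C.nbhdSkel_inter_skel hz f h]
          exact ⟨hm, hcc h1⟩
      rw [hNW] at hyd
      exact hyd.1
  rw [heq]
  exact (C.isClosed_closedCell i).inter (isClosed_compl_iff.2 hWo)

lemma mem_nbhd_self (C : CWStruct X) {i₀ : C.ι}
    {z : EuclideanSpace ℝ (Fin (C.dim i₀))} (hz : ‖z‖ < 1) (f : C.ι → ℕ) :
    C.map i₀ z ∈ C.nbhd i₀ z f := by
  refine mem_iUnion.2 ⟨C.dim i₀, ?_⟩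
  have hb := C.mem_ballNbhd_self hz (f i₀)
  suffices H : ∀ k, C.dim i₀ = k → C.map i₀ z ∈ C.nbhdSkel i₀ z f k from H _ rfl
  intro k hk
  cases k with
  | zero =>
      rw [nbhdSkel_zero, if_pos hk]
      exact hb
  | succ n =>
      rw [nbhdSkel_succ]
      exact Or.inl (Or.inl (by rw [if_pos hk]; exact hb))

end CWStruct
namespace CWStruct

variable {X : Type} [TopologicalSpace X]

noncomputable def Fset (C : CWStruct X) (e : C.ι) : Finset C.ι := (C.closureFinite e).choose

lemma Fset_dim (C : CWStruct X) (e : C.ι) : ∀ j ∈ C.Fset e, C.dim j < C.dim e :=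
  (C.closureFinite e).choose_spec.1

lemma Fset_subset (C : CWStruct X) (e : C.ι) :
    C.sphereImage e ⊆ ⋃ j ∈ C.Fset e, C.openCell j :=
  (C.closureFinite e).choose_spec.2

noncomputable def Dset (C : CWStruct X) (e : C.ι) (m : ℕ) (U : Set X) :
    Set (EuclideanSpace ℝ (Fin (C.dim e))) :=
  {w | ((m:ℝ)+1)/((m:ℝ)+2) ≤ ‖w‖ ∧ ‖w‖ ≤ 1 ∧ C.map e (‖w‖⁻¹ • w) ∈ closure U}

lemma mem_Dset (C : CWStruct X) {e : C.ι} {m : ℕ} {U : Set X}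
    {w : EuclideanSpace ℝ (Fin (C.dim e))} :
    w ∈ C.Dset e m U ↔
      ((m:ℝ)+1)/((m:ℝ)+2) ≤ ‖w‖ ∧ ‖w‖ ≤ 1 ∧ C.map e (‖w‖⁻¹ • w) ∈ closure U :=
  Iff.rfl

lemma Dset_subset_closedBall (C : CWStruct X) (e : C.ι) (m : ℕ) (U : Set X) :
    C.Dset e m U ⊆ closedBall (0 : EuclideanSpace ℝ (Fin (C.dim e))) 1 :=
  fun w hw => mem_closedBall_zero_iff.2 ((C.mem_Dset.1 hw).2.1)

lemma isClosed_Dset (C : CWStruct X) (e : C.ι) (m : ℕ) (U : Set X) :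
    IsClosed (C.Dset e m U) := by
  have hb : (0:ℝ) < ((m:ℝ)+1)/((m:ℝ)+2) := by positivity
  have hset : IsClosed {w : EuclideanSpace ℝ (Fin (C.dim e)) |
      ((m:ℝ)+1)/((m:ℝ)+2) ≤ ‖w‖ ∧ ‖w‖ ≤ 1} := by
    have heq1 : {w : EuclideanSpace ℝ (Fin (C.dim e)) | ((m:ℝ)+1)/((m:ℝ)+2) ≤ ‖w‖ ∧ ‖w‖ ≤ 1}
        = (fun w : EuclideanSpace ℝ (Fin (C.dim e)) => ‖w‖) ⁻¹'
            (Icc (((m:ℝ)+1)/((m:ℝ)+2)) 1) := rfl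
    rw [heq1]
    exact isClosed_Icc.preimage continuous_norm
  have h0 : ∀ w ∈ {w : EuclideanSpace ℝ (Fin (C.dim e)) |
      ((m:ℝ)+1)/((m:ℝ)+2) ≤ ‖w‖ ∧ ‖w‖ ≤ 1}, ‖w‖ ≠ 0 :=
    fun w hw => ne_of_gt (lt_of_lt_of_le hb hw.1)
  have h1 : ContinuousOn (fun w : EuclideanSpace ℝ (Fin (C.dim e)) => ‖w‖⁻¹ • w)
      {w : EuclideanSpace ℝ (Fin (C.dim e)) | ((m:ℝ)+1)/((m:ℝ)+2) ≤ ‖w‖ ∧ ‖w‖ ≤ 1} :=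
    (continuous_norm.continuousOn.inv₀ h0).smul continuous_id.continuousOn
  have hcont : ContinuousOn (fun w : EuclideanSpace ℝ (Fin (C.dim e)) => C.map e (‖w‖⁻¹ • w))
      {w : EuclideanSpace ℝ (Fin (C.dim e)) | ((m:ℝ)+1)/((m:ℝ)+2) ≤ ‖w‖ ∧ ‖w‖ ≤ 1} := by
    refine (C.continuousOn e).comp h1 ?_
    intro w hw
    rw [mem_closedBall_zero_iff, norm_smul, norm_inv, norm_norm, inv_mul_cancel₀ (h0 w hw)]
  have heq : C.Dset e m U = {w : EuclideanSpace ℝ (Fin (C.dim e)) |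
        ((m:ℝ)+1)/((m:ℝ)+2) ≤ ‖w‖ ∧ ‖w‖ ≤ 1}
      ∩ (fun w : EuclideanSpace ℝ (Fin (C.dim e)) => C.map e (‖w‖⁻¹ • w)) ⁻¹' closure U := by
    ext w
    rw [C.mem_Dset]
    simp only [mem_inter_iff, mem_preimage, mem_setOf_eq]
    tauto
  rw [heq]
  exact hcont.preimage_isClosed_of_isClosed hset isClosed_closure

lemma isCompact_Dset (C : CWStruct X) (e : C.ι) (m : ℕ) (U : Set X) :
    IsCompact (C.Dset e m U) :=
  (isCompact_closedBall _ _).of_isClosed_subset (C.isClosed_Dset e m U)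
    (C.Dset_subset_closedBall e m U)

lemma Dset_anti (C : CWStruct X) (e : C.ι) {m m' : ℕ} (h : m ≤ m') (U : Set X) :
    C.Dset e m' U ⊆ C.Dset e m U := by
  intro w hw
  rw [C.mem_Dset] at hw ⊢
  obtain ⟨h1, h2, h3⟩ := hw
  refine ⟨le_trans ?_ h1, h2, h3⟩
  have h4 : (m:ℝ) ≤ m' := Nat.cast_le.2 h
  rw [div_le_div_iff₀ (by positivity) (by positivity)]
  nlinarith

lemma collar_subset_image_Dset (C : CWStruct X) (e : C.ι) (m : ℕ) {U₀ U' : Set X}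
    (h : U₀ ∩ C.sphereImage e ⊆ U') :
    C.collar e (m+1) U₀ ⊆ C.map e '' C.Dset e m U' := by
  rintro y ⟨p, ⟨t, ⟨hta, ht1⟩, z', hz', hU, rfl⟩, rfl⟩
  have hta' : ((m:ℝ)+1)/((m:ℝ)+2) < t := by
    have : (((m+1:ℕ)):ℝ)/((((m+1:ℕ)):ℝ)+1) = ((m:ℝ)+1)/((m:ℝ)+2) := by
      push_cast; ring_nf
    rw [← this]
    exact hta
  have ht0 : 0 < t := lt_of_le_of_lt (frac_nonneg (m+1)) hta
  have hn : ‖t • z'‖ = t := by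
    rw [norm_smul, hz', mul_one, Real.norm_eq_abs, abs_of_pos ht0]
  refine ⟨t • z', C.mem_Dset.2 ⟨?_, ?_, ?_⟩, rfl⟩
  · rw [hn]; exact le_of_lt hta'
  · rw [hn]; exact ht1
  · rw [hn, smul_smul, inv_mul_cancel₀ (ne_of_gt ht0), one_smul]
    exact subset_closure (h ⟨hU, z', mem_sphere_zero_iff_norm.2 hz', rfl⟩)

open Classical in
noncomputable def pick (C : CWStruct X) (V : Set X) (e : C.ι) (U : Set X) : ℕ :=
  if h : ∃ m : ℕ, C.map e '' C.Dset e m U ⊆ V then h.choose + 1 else 0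

lemma pick_spec (C : CWStruct X) {V : Set X} {e : C.ι} {U : Set X}
    (h : ∃ m : ℕ, C.map e '' C.Dset e m U ⊆ V) :
    ∃ m : ℕ, C.pick V e U = m + 1 ∧ C.map e '' C.Dset e m U ⊆ V := by
  unfold pick
  rw [dif_pos h]
  exact ⟨h.choose, rfl, h.choose_spec⟩

lemma exists_Dset_subset [T2Space X] (C : CWStruct X) {V U : Set X} (hV : IsOpen V)
    (hcl : closure U ⊆ V) (e : C.ι) :
    ∃ m : ℕ, C.map e '' C.Dset e m U ⊆ V := by
  by_contra hcon
  push_neg at hcon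
  have hEclosed : ∀ m : ℕ, IsClosed (C.Dset e m U ∩ C.map e ⁻¹' Vᶜ) := fun m =>
    ((C.continuousOn e).mono (C.Dset_subset_closedBall e m U)).preimage_isClosed_of_isClosed
      (C.isClosed_Dset e m U) hV.isClosed_compl
  have hEcompact : ∀ m : ℕ, IsCompact (C.Dset e m U ∩ C.map e ⁻¹' Vᶜ) := fun m =>
    (C.isCompact_Dset e m U).of_isClosed_subset (hEclosed m) inter_subset_left
  have hEne : ∀ m : ℕ, (C.Dset e m U ∩ C.map e ⁻¹' Vᶜ).Nonempty := by
    intro m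
    obtain ⟨y, hy, hyV⟩ := not_subset.1 (hcon m)
    obtain ⟨w, hw, rfl⟩ := hy
    exact ⟨w, hw, hyV⟩
  have hEanti : ∀ {m m' : ℕ}, m ≤ m' →
      (C.Dset e m' U ∩ C.map e ⁻¹' Vᶜ) ⊆ (C.Dset e m U ∩ C.map e ⁻¹' Vᶜ) := fun h =>
    inter_subset_inter_left _ (C.Dset_anti e h U)
  have hdir : Directed (fun s t : Set (EuclideanSpace ℝ (Fin (C.dim e))) => s ⊇ t)
      (fun m => C.Dset e m U ∩ C.map e ⁻¹' Vᶜ) := by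
    intro m m'
    exact ⟨max m m', hEanti (le_max_left _ _), hEanti (le_max_right _ _)⟩
  obtain ⟨w, hw⟩ := IsCompact.nonempty_iInter_of_directed_nonempty_isCompact_isClosed
    (fun m => C.Dset e m U ∩ C.map e ⁻¹' Vᶜ) hdir hEne hEcompact hEclosed
  rw [mem_iInter] at hw
  have hw1 : ‖w‖ = 1 := by
    have hle := (C.mem_Dset.1 (hw 0).1).2.1
    refine le_antisymm hle ?_
    by_contra hlt
    push_neg at hlt
    obtain ⟨k, hk⟩ := exists_nat_one_div_lt (show (0:ℝ) < 1 - ‖w‖ by linarith)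
    have hbd := (C.mem_Dset.1 (hw k).1).1
    have h1 : (0:ℝ) < (k:ℝ) + 1 := by positivity
    have h2 : (0:ℝ) < (k:ℝ) + 2 := by positivity
    rw [div_le_iff₀ h2] at hbd
    rw [div_lt_iff₀ h1] at hk
    nlinarith
  have hmem := (C.mem_Dset.1 (hw 0).1).2.2
  rw [hw1, inv_one, one_smul] at hmem
  exact (hw 0).2 (hcl hmem)

noncomputable def pickF (C : CWStruct X) (i₀ : C.ι) (z : EuclideanSpace ℝ (Fin (C.dim i₀)))
    (V : Set X) (m₀ : ℕ) : ℕ → C.ι → ℕ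
  | 0 => fun _ => m₀
  | n+1 => fun e =>
      if C.dim e = n + 1 then
        max (C.pickF i₀ z V m₀ n e)
          (C.pick V e (⋃ j ∈ C.Fset e, C.nbhdSkel i₀ z (C.pickF i₀ z V m₀ n) n ∩ C.closedCell j))
      else C.pickF i₀ z V m₀ n e

lemma pickF_zero (C : CWStruct X) (i₀ : C.ι) (z : EuclideanSpace ℝ (Fin (C.dim i₀)))
    (V : Set X) (m₀ : ℕ) (e : C.ι) : C.pickF i₀ z V m₀ 0 e = m₀ := rfl

lemma pickF_succ (C : CWStruct X) (i₀ : C.ι) (z : EuclideanSpace ℝ (Fin (C.dim i₀)))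
    (V : Set X) (m₀ : ℕ) (n : ℕ) (e : C.ι) :
    C.pickF i₀ z V m₀ (n+1) e =
      if C.dim e = n + 1 then
        max (C.pickF i₀ z V m₀ n e)
          (C.pick V e (⋃ j ∈ C.Fset e, C.nbhdSkel i₀ z (C.pickF i₀ z V m₀ n) n ∩ C.closedCell j))
      else C.pickF i₀ z V m₀ n e := rfl

lemma pickF_ge (C : CWStruct X) (i₀ : C.ι) (z : EuclideanSpace ℝ (Fin (C.dim i₀)))
    (V : Set X) (m₀ : ℕ) : ∀ n (e : C.ι), m₀ ≤ C.pickF i₀ z V m₀ n e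
  | 0, e => le_rfl
  | n+1, e => by
      rw [pickF_succ]
      split_ifs with hd
      · exact le_trans (C.pickF_ge i₀ z V m₀ n e) (le_max_left _ _)
      · exact C.pickF_ge i₀ z V m₀ n e

lemma pickF_stable (C : CWStruct X) (i₀ : C.ι) (z : EuclideanSpace ℝ (Fin (C.dim i₀)))
    (V : Set X) (m₀ : ℕ) {n m : ℕ} (h : n ≤ m) (e : C.ι) (he : C.dim e ≤ n) :
    C.pickF i₀ z V m₀ m e = C.pickF i₀ z V m₀ n e := by
  induction m, h using Nat.le_induction with
  | base => rfl
  | succ m hm IH =>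
      rw [pickF_succ, if_neg (by omega)]
      exact IH

lemma closure_nbhdSkel_subset [T2Space X] (C : CWStruct X) {i₀ : C.ι}
    {z : EuclideanSpace ℝ (Fin (C.dim i₀))} (hz : ‖z‖ < 1) {V : Set X} (hV : IsOpen V)
    {m₀ : ℕ} (hm₀ : closure (C.ballNbhd i₀ z m₀) ⊆ V) :
    ∀ n, ∀ j : C.ι, C.dim j ≤ n →
      closure (C.nbhdSkel i₀ z (fun e => C.pickF i₀ z V m₀ (C.dim e) e) n
        ∩ C.closedCell j) ⊆ V := by
  set f : C.ι → ℕ := fun e => C.pickF i₀ z V m₀ (C.dim e) e with hf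
  have hfsk : ∀ n, C.nbhdSkel i₀ z f n = C.nbhdSkel i₀ z (C.pickF i₀ z V m₀ n) n := by
    intro n
    refine C.nbhdSkel_congr i₀ z n fun e he => ?_
    rw [hf]
    exact (C.pickF_stable i₀ z V m₀ he e le_rfl).symm
  have hfi₀ : m₀ ≤ f i₀ := C.pickF_ge i₀ z V m₀ _ i₀
  intro n
  induction n with
  | zero =>
      intro j hj
      rw [nbhdSkel_zero]
      split_ifs with hd
      · have hfe : f i₀ = m₀ := by
          show C.pickF i₀ z V m₀ (C.dim i₀) i₀ = m₀
          rw [hd, pickF_zero]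
        rw [hfe]
        exact (closure_mono inter_subset_left).trans hm₀
      · simp
  | succ n IH =>
      intro j hj
      rcases Nat.lt_or_ge (C.dim j) (n+1) with hlt | hge
      · have hcs : C.closedCell j ⊆ C.skel n := C.closedCell_subset_skel (by omega)
        have heq : C.nbhdSkel i₀ z f (n+1) ∩ C.closedCell j
            = C.nbhdSkel i₀ z f n ∩ C.closedCell j := by
          ext y
          constructor
          · rintro ⟨h1, h2⟩
            refine ⟨?_, h2⟩
            rw [← C.nbhdSkel_succ_inter_skel hz f n]
            exact ⟨h1, hcs h2⟩
          · rintro ⟨h1, h2⟩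
            exact ⟨C.nbhdSkel_le_succ i₀ z f n h1, h2⟩
        rw [heq]
        exact IH j (by omega)
      · have hjd : C.dim j = n + 1 := by omega
        rw [C.nbhdSkel_succ_inter_closedCell hz f hjd, closure_union, closure_union]
        set Uj : Set X := ⋃ j' ∈ C.Fset j, C.nbhdSkel i₀ z f n ∩ C.closedCell j' with hUj
        have hUjcl : closure Uj ⊆ V := by
          rw [hUj, Finset.closure_biUnion]
          refine iUnion₂_subset fun j' hj' => ?_
          exact IH j' (by have := C.Fset_dim j j' hj'; omega)
        have hNccU : C.nbhdSkel i₀ z f n ∩ C.sphereImage j ⊆ Uj := by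
          rintro y ⟨hyN, hysp⟩
          rw [hUj]
          obtain ⟨j', hj', hy'⟩ := mem_iUnion₂.1 (C.Fset_subset j hysp)
          exact mem_biUnion hj' ⟨hyN, C.openCell_subset_closedCell j' hy'⟩
        refine union_subset (union_subset ?_ ?_) ?_
        · have h1 : C.nbhdSkel i₀ z f n ∩ C.closedCell j ⊆ Uj := by
            rintro y ⟨hyN, hycc⟩
            have hsk := C.nbhdSkel_subset_skel hz f n hyN
            have hysp : y ∈ C.sphereImage j := by
              rcases (C.closedCell_eq j ▸ hycc) with h | h
              · exact absurd hsk (disjoint_left.1 (C.disjoint_openCell_skel (by omega)) h)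
              · exact h
            exact hNccU ⟨hyN, hysp⟩
          exact (closure_mono h1).trans hUjcl
        · have hfj : f j = C.pickF i₀ z V m₀ (n+1) j := by
            show C.pickF i₀ z V m₀ (C.dim j) j = C.pickF i₀ z V m₀ (n+1) j
            rw [hjd]
          have hUeq : (⋃ j' ∈ C.Fset j,
                C.nbhdSkel i₀ z (C.pickF i₀ z V m₀ n) n ∩ C.closedCell j') = Uj := by
            rw [hUj, hfsk n]
          have hex : ∃ m, C.map j '' C.Dset j m Uj ⊆ V := C.exists_Dset_subset hV hUjcl j
          obtain ⟨m, hpeq, hmsub⟩ := C.pick_spec hex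
          have hfj_ge : m + 1 ≤ f j := by
            rw [hfj, pickF_succ, if_pos hjd, hUeq, hpeq]
            exact le_max_right _ _
          have hsub : C.collar j (f j) (C.nbhdSkel i₀ z f n) ⊆ C.map j '' C.Dset j m Uj :=
            (C.collar_anti j hfj_ge _).trans (C.collar_subset_image_Dset j m hNccU)
          have hclosed : IsClosed (C.map j '' C.Dset j m Uj) :=
            C.isClosed_image_of_isClosed j (C.isClosed_Dset j m Uj)
              (C.Dset_subset_closedBall j m Uj)
          refine (closure_mono inter_subset_left).trans ?_
          exact (closure_minimal hsub hclosed).trans hmsub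
        · split_ifs with hd
          · refine (closure_mono inter_subset_left).trans ?_
            exact (closure_mono (C.ballNbhd_anti i₀ z hfi₀)).trans hm₀
          · simp

lemma exists_ballNbhd_closure_subset [T2Space X] (C : CWStruct X) {i₀ : C.ι}
    {z : EuclideanSpace ℝ (Fin (C.dim i₀))} (hz : ‖z‖ < 1) {V : Set X} (hV : IsOpen V)
    (hxV : C.map i₀ z ∈ V) :
    ∃ m₀ : ℕ, closure (C.ballNbhd i₀ z m₀) ⊆ V := by
  have hnb : closedBall (0 : EuclideanSpace ℝ (Fin (C.dim i₀))) 1 ∈ 𝓝 z := by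
    rw [_root_.mem_nhds_iff]
    exact ⟨ball 0 1, ball_subset_closedBall, isOpen_ball, mem_ball_zero_iff.2 hz⟩
  have hca : ContinuousAt (C.map i₀) z := (C.continuousOn i₀).continuousAt hnb
  have hpre : C.map i₀ ⁻¹' V ∈ 𝓝 z := hca.preimage_mem_nhds (hV.mem_nhds hxV)
  obtain ⟨δ, hδ, hball⟩ := Metric.mem_nhds_iff.1 hpre
  obtain ⟨m₀, hm₀⟩ := exists_nat_one_div_lt hδ
  refine ⟨m₀, ?_⟩
  have hrδ : min (1/((m₀:ℝ)+1)) ((1-‖z‖)/2) < δ := lt_of_le_of_lt (min_le_left _ _) hm₀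
  have hsub1 : closedBall z (min (1/((m₀:ℝ)+1)) ((1-‖z‖)/2))
      ⊆ closedBall (0 : EuclideanSpace ℝ (Fin (C.dim i₀))) 1 := by
    intro w hw
    rw [mem_closedBall] at hw
    rw [mem_closedBall_zero_iff]
    have h2 : ‖w‖ ≤ ‖w - z‖ + ‖z‖ := by
      have := norm_add_le (w - z) z; simpa using this
    rw [dist_eq_norm] at hw
    have h3 := min_le_right (1/((m₀:ℝ)+1)) ((1-‖z‖)/2)
    linarith
  have hclosed : IsClosed (C.map i₀ '' closedBall z (min (1/((m₀:ℝ)+1)) ((1-‖z‖)/2))) :=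
    C.isClosed_image_of_isClosed i₀ Metric.isClosed_closedBall hsub1
  refine (closure_minimal (image_mono ball_subset_closedBall) hclosed).trans ?_
  rintro y ⟨w, hw, rfl⟩
  refine hball ?_
  rw [mem_ball]
  exact lt_of_le_of_lt (mem_closedBall.1 hw) hrδ

end CWStruct
/-- The sets `U_f(x)`, as `f` ranges over functions `ι → ℕ`, form a neighbourhood base of
open sets at `x`. -/
theorem nbhd_isBasis {X : Type} [TopologicalSpace X] [T2Space X] (C : CWStruct X)
    (x : X) (i₀ : C.ι) (z : EuclideanSpace ℝ (Fin (C.dim i₀)))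
    (hz : ‖z‖ < 1) (hxz : C.map i₀ z = x) :
    (∀ f : C.ι → ℕ, IsOpen (C.nbhd i₀ z f) ∧ x ∈ C.nbhd i₀ z f) ∧
    (∀ V : Set X, IsOpen V → x ∈ V → ∃ f : C.ι → ℕ, C.nbhd i₀ z f ⊆ V) := by
  constructor
  · intro f
    refine ⟨C.isOpen_nbhd hz f, ?_⟩
    rw [← hxz]
    exact C.mem_nbhd_self hz f
  · intro V hV hxV
    have hmxV : C.map i₀ z ∈ V := by rw [hxz]; exact hxV
    obtain ⟨m₀, hm₀⟩ := C.exists_ballNbhd_closure_subset hz hV hmxV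
    refine ⟨fun e => C.pickF i₀ z V m₀ (C.dim e) e, ?_⟩
    refine iUnion_subset fun n => ?_
    intro y hy
    have hsk := C.nbhdSkel_subset_skel hz _ n hy
    obtain ⟨jj, hjle, hjy⟩ := (C.mem_skel_iff).1 hsk
    have hmem : y ∈ C.nbhdSkel i₀ z (fun e => C.pickF i₀ z V m₀ (C.dim e) e) n
        ∩ C.closedCell jj := ⟨hy, C.openCell_subset_closedCell jj hjy⟩
    exact C.closure_nbhdSkel_subset hz hV hm₀ n jj hjle (subset_closure hmem)
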